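/- Assume α̃ < 1 (hence 0 < r < 1). Then the conditional mean queue length in a regular busy period satisfies E[L₁] = (Σ_{k≥1} k·π_{k1}) / (Σ_{k≥1} π_{k1}) = (1 − rα̃) / ((1−α̃)(1−r)). -/

import Mathlib

set_option maxHeartbeats 1000000 in
/-- Geo/Geo/1 with multiple working vacations, partially observable case.
Conditional mean queue length in a regular busy period:
E[L₁] = (Σ_{k≥1} k π_{k1}) / (Σ_{k≥1} π_{k1}) = (1 - rα̃)/((1-α̃)(1-r)). -/
theorem stmt_9
    (p μb μv θ q0 q1 p0 p1 al be r K : ℝ) (π0 π1 : ℕ → ℝ)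
    (hp : p ∈ Set.Ioo (0:ℝ) 1) (hμb : μb ∈ Set.Ioo (0:ℝ) 1)
    (hμv : μv ∈ Set.Ioo (0:ℝ) 1) (hθ : θ ∈ Set.Ioo (0:ℝ) 1)
    (hq0 : q0 ∈ Set.Icc (0:ℝ) 1) (hq1 : q1 ∈ Set.Icc (0:ℝ) 1)
    (hp0 : p0 = p * q0) (hp1 : p1 = p * q1)
    (hp0m : p0 ∈ Set.Ioo (0:ℝ) 1) (hp1m : p1 ∈ Set.Ioo (0:ℝ) 1)
    (hal : al = p1 * (1 - μb) / ((1 - p1) * μb))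
    (hbe : be = θ / (1 - θ))
    (hr : r = (be + p0 * (1 - μv) + (1 - p0) * μv -
        Real.sqrt ((be + p0 * (1 - μv) + (1 - p0) * μv) ^ 2 -
          4 * p0 * (1 - p0) * μv * (1 - μv))) / (2 * (1 - p0) * μv))
    (hK : K = (1 - p1) * μb * (1 - r) * (1 - al) /
        ((1 - p1) * μb * (1 - r) * (1 - al) *
          (θ + (1 - θ) * (1 - p0) * μv * (1 - r) + p0 * (1 - θ)) + p0 * θ))
    (hπ00 : π0 0 = K * (θ + (1 - θ) * (1 - p0) * μv * (1 - r)))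
    (hπ0k : ∀ k : ℕ, 1 ≤ k → π0 k = K * p0 * (1 - θ) * (1 - r) * r ^ (k - 1))
    (hπ1k : ∀ k : ℕ, 1 ≤ k →
      π1 k = K * (p0 * θ / ((1 - p1) * μb)) * ∑ j ∈ Finset.range k, r ^ j * al ^ (k - 1 - j))
    (hal1 : al < 1) :
    Summable (fun k : ℕ => ((k : ℝ) + 1) * π1 (k + 1)) ∧
    (∑' k : ℕ, ((k : ℝ) + 1) * π1 (k + 1)) / (∑' k : ℕ, π1 (k + 1))
      = (1 - r * al) / ((1 - al) * (1 - r)) := by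
  obtain ⟨hp0a, hp0b⟩ := hp0m
  obtain ⟨hp1a, hp1b⟩ := hp1m
  obtain ⟨hμba, hμbb⟩ := hμb
  obtain ⟨hμva, hμvb⟩ := hμv
  obtain ⟨hθa, hθb⟩ := hθ
  -- abbreviations for the quadratic
  set a : ℝ := (1 - p0) * μv with ha
  set c : ℝ := p0 * (1 - μv) with hc
  have hapos : 0 < a := by apply mul_pos <;> linarith
  have hcpos : 0 < c := by apply mul_pos <;> linarith
  have hbepos : 0 < be := by
    rw [hbe]; exact div_pos hθa (by linarith)
  -- the discriminant
  set s : ℝ := be + p0 * (1 - μv) + (1 - p0) * μv with hs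
  have hs' : s = be + c + a := by rw [hs, hc, ha]
  set D : ℝ := s ^ 2 - 4 * p0 * (1 - p0) * μv * (1 - μv) with hD
  have hD' : D = s ^ 2 - 4 * a * c := by rw [hD, ha, hc]; ring
  have hDsub : D - (be + c - a) ^ 2 = 4 * a * be := by
    rw [hD', hs']; ring
  have hDpos : 0 < D := by
    have h1 := sq_nonneg (be + c - a)
    have h2 := mul_pos hapos hbepos
    linarith
  have hspos : 0 < s := by rw [hs']; linarith
  have hsqD : Real.sqrt D ^ 2 = D := Real.sq_sqrt hDpos.le
  have hsqDlt : Real.sqrt D < s := by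
    have h1 : D < s ^ 2 := by
      have h2 := mul_pos hapos hcpos
      rw [hD']; linarith
    calc Real.sqrt D < Real.sqrt (s ^ 2) := Real.sqrt_lt_sqrt hDpos.le h1
      _ = s := by rw [Real.sqrt_sq hspos.le]
  have hsqDgt : be + c - a < Real.sqrt D := by
    have h1 : (be + c - a) ^ 2 < D := by
      have h2 := mul_pos hapos hbepos
      linarith
    calc be + c - a ≤ |be + c - a| := le_abs_self _
      _ = Real.sqrt ((be + c - a) ^ 2) := (Real.sqrt_sq_eq_abs _).symm
      _ < Real.sqrt D := Real.sqrt_lt_sqrt (sq_nonneg _) h1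
  -- bounds on r
  have hr0 : 0 < r := by
    rw [hr]
    apply div_pos (by simpa using sub_pos.mpr hsqDlt)
    rw [mul_assoc]; positivity
  have hr1 : r < 1 := by
    rw [hr, div_lt_one (by rw [mul_assoc]; positivity)]
    have : 2 * (1 - p0) * μv = 2 * a := by rw [ha]; ring
    rw [this]
    have : s - Real.sqrt D < 2 * a := by
      rw [hs']; linarith
    simpa using this
  -- bounds on al
  have hal0 : 0 < al := by
    rw [hal]
    apply div_pos (by nlinarith) (by nlinarith)
  -- positivity of K and C
  have hNK : 0 < (1 - p1) * μb * (1 - r) * (1 - al) := by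
    apply mul_pos (mul_pos (mul_pos (by linarith) hμba) (by linarith)) (by linarith)
  have hX : 0 < θ + (1 - θ) * (1 - p0) * μv * (1 - r) + p0 * (1 - θ) := by
    have h1 : 0 < (1 - θ) * (1 - p0) * μv * (1 - r) := by
      apply mul_pos (mul_pos (mul_pos (by linarith) (by linarith)) hμva) (by linarith)
    nlinarith
  have hKpos : 0 < K := by
    rw [hK]
    apply div_pos hNK
    nlinarith [mul_pos hNK hX, mul_pos hp0a hθa]
  set C : ℝ := K * (p0 * θ / ((1 - p1) * μb)) with hC
  have hCpos : 0 < C := by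
    apply mul_pos hKpos
    apply div_pos (mul_pos hp0a hθa) (by nlinarith)
  -- the series pieces
  have hπ : ∀ k : ℕ, π1 (k + 1) = C * ∑ j ∈ Finset.range (k + 1), r ^ j * al ^ (k - j) := by
    intro k
    have := hπ1k (k + 1) (by omega)
    simpa [Nat.add_sub_cancel] using this
  -- summability of geometric-type series
  have hrn : ‖r‖ < 1 := by rw [Real.norm_eq_abs, abs_of_nonneg hr0.le]; exact hr1
  have haln : ‖al‖ < 1 := by rw [Real.norm_eq_abs, abs_of_nonneg hal0.le]; exact hal1
  have hsr : Summable (fun j : ℕ => r ^ j) := summable_geometric_of_lt_one hr0.le hr1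
  have hsa : Summable (fun j : ℕ => al ^ j) := summable_geometric_of_lt_one hal0.le hal1
  have hsjr : Summable (fun j : ℕ => (j : ℝ) * r ^ j) :=
    (hasSum_coe_mul_geometric_of_norm_lt_one hrn).summable
  have hsja : Summable (fun j : ℕ => (j : ℝ) * al ^ j) :=
    (hasSum_coe_mul_geometric_of_norm_lt_one haln).summable
  -- f1 = (j+1) r^j, g1 = al^j, f2 = r^j, g2 = j al^j
  set f1 : ℕ → ℝ := fun j => ((j : ℝ) + 1) * r ^ j with hf1
  set g1 : ℕ → ℝ := fun j => al ^ j with hg1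
  set f2 : ℕ → ℝ := fun j => r ^ j with hf2
  set g2 : ℕ → ℝ := fun j => (j : ℝ) * al ^ j with hg2
  have hsf1 : Summable f1 := by
    have := hsjr.add hsr
    apply this.congr; intro j; simp [hf1]; ring
  have hnf1 : Summable fun j => ‖f1 j‖ := summable_abs_iff.mpr hsf1
  have hng1 : Summable fun j => ‖g1 j‖ := summable_abs_iff.mpr hsa
  have hnf2 : Summable fun j => ‖f2 j‖ := summable_abs_iff.mpr hsr
  have hng2 : Summable fun j => ‖g2 j‖ := summable_abs_iff.mpr hsja
  -- Cauchy product sums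
  have S1 : Summable fun n => ∑ k ∈ Finset.range (n + 1), f1 k * g1 (n - k) :=
    (summable_norm_sum_mul_range_of_summable_norm hnf1 hng1).of_norm
  have S2 : Summable fun n => ∑ k ∈ Finset.range (n + 1), f2 k * g2 (n - k) :=
    (summable_norm_sum_mul_range_of_summable_norm hnf2 hng2).of_norm
  have S0 : Summable fun n => ∑ k ∈ Finset.range (n + 1), f2 k * g1 (n - k) :=
    (summable_norm_sum_mul_range_of_summable_norm hnf2 hng1).of_norm
  have E1 : ((∑' n, f1 n) * ∑' n, g1 n)
      = ∑' n, ∑ k ∈ Finset.range (n + 1), f1 k * g1 (n - k) :=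
    tsum_mul_tsum_eq_tsum_sum_range_of_summable_norm hnf1 hng1
  have E2 : ((∑' n, f2 n) * ∑' n, g2 n)
      = ∑' n, ∑ k ∈ Finset.range (n + 1), f2 k * g2 (n - k) :=
    tsum_mul_tsum_eq_tsum_sum_range_of_summable_norm hnf2 hng2
  have E0 : ((∑' n, f2 n) * ∑' n, g1 n)
      = ∑' n, ∑ k ∈ Finset.range (n + 1), f2 k * g1 (n - k) :=
    tsum_mul_tsum_eq_tsum_sum_range_of_summable_norm hnf2 hng1
  -- key pointwise identity: (n+1) h n = A n + B n
  have hkey : ∀ n : ℕ, ((n : ℝ) + 1) * ∑ j ∈ Finset.range (n + 1), r ^ j * al ^ (n - j)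
      = (∑ k ∈ Finset.range (n + 1), f1 k * g1 (n - k))
        + ∑ k ∈ Finset.range (n + 1), f2 k * g2 (n - k) := by
    intro n
    rw [← Finset.sum_add_distrib, Finset.mul_sum]
    apply Finset.sum_congr rfl
    intro j hj
    have hjn : j ≤ n := by
      have := Finset.mem_range.mp hj; omega
    have hcast : ((n - j : ℕ) : ℝ) = (n : ℝ) - j := by
      rw [Nat.cast_sub hjn]
    simp only [hf1, hg1, hf2, hg2, hcast]
    ring
  -- numerator summability and value
  have hnum_eq : (fun k : ℕ => ((k : ℝ) + 1) * π1 (k + 1))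
      = fun n : ℕ => C * ((∑ k ∈ Finset.range (n + 1), f1 k * g1 (n - k))
        + ∑ k ∈ Finset.range (n + 1), f2 k * g2 (n - k)) := by
    funext k
    rw [hπ k, ← hkey k]; ring
  have hsum_num : Summable (fun k : ℕ => ((k : ℝ) + 1) * π1 (k + 1)) := by
    rw [hnum_eq]; exact ((S1.add S2).mul_left C)
  refine ⟨hsum_num, ?_⟩
  have hden_eq : (fun k : ℕ => π1 (k + 1))
      = fun n : ℕ => C * ∑ k ∈ Finset.range (n + 1), f2 k * g1 (n - k) := by
    funext k
    rw [hπ k]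
  -- values of the basic tsums
  have Tr : (∑' n, f2 n) = (1 - r)⁻¹ := tsum_geometric_of_lt_one hr0.le hr1
  have Ta : (∑' n, g1 n) = (1 - al)⁻¹ := tsum_geometric_of_lt_one hal0.le hal1
  have Tjr : (∑' n : ℕ, (n : ℝ) * r ^ n) = r / (1 - r) ^ 2 :=
    tsum_coe_mul_geometric_of_norm_lt_one hrn
  have Tja : (∑' n, g2 n) = al / (1 - al) ^ 2 :=
    tsum_coe_mul_geometric_of_norm_lt_one haln
  have Tf1 : (∑' n, f1 n) = r / (1 - r) ^ 2 + (1 - r)⁻¹ := by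
    have h : (∑' n, f1 n) = (∑' n : ℕ, ((n : ℝ) * r ^ n + r ^ n)) := by
      apply tsum_congr; intro n; simp [hf1]; ring
    rw [h, Summable.tsum_add hsjr hsr, Tjr, Tr]
  -- compute the two tsums
  have hTnum : (∑' k : ℕ, ((k : ℝ) + 1) * π1 (k + 1))
      = C * ((r / (1 - r) ^ 2 + (1 - r)⁻¹) * (1 - al)⁻¹ + (1 - r)⁻¹ * (al / (1 - al) ^ 2)) := by
    rw [hnum_eq, tsum_mul_left, Summable.tsum_add S1 S2, ← E1, ← E2, Tf1, Tr, Ta, Tja]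
  have hTden : (∑' k : ℕ, π1 (k + 1)) = C * ((1 - r)⁻¹ * (1 - al)⁻¹) := by
    rw [hden_eq, tsum_mul_left, ← E0, Tr, Ta]
  rw [hTnum, hTden]
  have h1r : (1 : ℝ) - r ≠ 0 := by linarith
  have h1a : (1 : ℝ) - al ≠ 0 := by linarith
  field_simp
  ring
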